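/- Let n = 2m+1 and set D = n−3 = 2m−2. In the graded ring H = ℚ[α,β,δ_1,…,δ_n]/(I), where I is generated by δ_i² − β for all i together with the relations R^J = r_{m−|J|}(α,β)·∏_{k∈J}δ_k for all subsets J ⊆ {1,…,n} with |J| ≤ m (with r_k defined by r_0 = 1, r_1 = α, r_{k+1} = α r_k − k² β r_{k−1}), every monomial α^a β^b ∏_{k∈J} δ_k with a + b + |J| ≥ m lies in the ideal generated by the images of monomials of lower α-β-δ total weight together with I; equivalently, the monomials α^a β^b ∏_{k∈J} δ_k with a + b + |J| < m span H as a ℚ-vector space. -/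

import Mathlib

open MvPolynomial

/-- The polynomials `r_k(α, β)` (`r_0 = 1`, `r_1 = α`, `r_{k+1} = α r_k − k² β r_{k−1}`)
inside `ℚ[α, β, δ_1, …, δ_N]`, where variable `0` is `α` and variable `1` is `β`. -/
noncomputable def rPoly (N : ℕ) : ℕ → MvPolynomial (Fin (N + 2)) ℚ
  | 0 => 1
  | 1 => X 0
  | (k + 2) => X 0 * rPoly N (k + 1) - C ((k + 1 : ℚ) ^ 2) * (X 1 * rPoly N k)

/-- The ideal of relations for `n = 2m+1`: generated by `δ_i² − β` for all `i` and
the relations `R^J = r_{m−|J|}(α,β)·∏_{k∈J} δ_k` for all `J ⊆ {1,…,n}` with `|J| ≤ m`. -/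
noncomputable def relIdeal (m : ℕ) : Ideal (MvPolynomial (Fin (2 * m + 1 + 2)) ℚ) :=
  Ideal.span
    ((Set.range fun i : Fin (2 * m + 1) =>
        (X i.succ.succ : MvPolynomial (Fin (2 * m + 1 + 2)) ℚ) ^ 2 - X 1) ∪
      {q | ∃ J : Finset (Fin (2 * m + 1)), J.card ≤ m ∧
        q = rPoly (2 * m + 1) (m - J.card) * ∏ k ∈ J, X k.succ.succ})

/-- structure of rPoly: r_d = α^d + combination of α^e β^f with e+2f=d, f ≥ 1. -/
lemma rStruct (N : ℕ) : ∀ d, rPoly N d - X 0 ^ d ∈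
    Submodule.span ℚ ((fun p : ℕ × ℕ => (X 0 : MvPolynomial (Fin (N + 2)) ℚ) ^ p.1 * X 1 ^ p.2) ''
      {p | p.1 + 2 * p.2 = d ∧ 1 ≤ p.2}) := by
  have gen : ∀ d e f, e + 2 * f = d → 1 ≤ f →
      (X 0 : MvPolynomial (Fin (N + 2)) ℚ) ^ e * X 1 ^ f ∈
        Submodule.span ℚ ((fun p : ℕ × ℕ => (X 0 : MvPolynomial (Fin (N + 2)) ℚ) ^ p.1 * X 1 ^ p.2) ''
          {p | p.1 + 2 * p.2 = d ∧ 1 ≤ p.2}) := fun d e f h1 h2 =>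
    Submodule.subset_span ⟨(e, f), ⟨h1, h2⟩, rfl⟩
  intro d
  induction d using Nat.strong_induction_on with
  | _ d ih =>
    match d with
    | 0 => simp [rPoly]
    | 1 => simp [rPoly]
    | (k + 2) =>
      have h1 := ih (k + 1) (by omega)
      have h2 := ih k (by omega)
      have key : rPoly N (k + 2) - X 0 ^ (k + 2) =
          X 0 * (rPoly N (k + 1) - X 0 ^ (k + 1))
          - C ((k + 1 : ℚ) ^ 2) * (X 1 * (rPoly N k - X 0 ^ k))
          - C ((k + 1 : ℚ) ^ 2) * (X 1 * X 0 ^ k) := by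
        rw [rPoly]; ring
      rw [key]
      refine Submodule.sub_mem _ (Submodule.sub_mem _ ?_ ?_) ?_
      · clear key h2
        refine Submodule.span_induction (fun x hx => ?_) (by simp) (fun x y _ _ hx hy => ?_)
          (fun a x _ hx => ?_) h1
        · obtain ⟨⟨e, f⟩, ⟨hef, hf⟩, rfl⟩ := hx
          have : (X 0 : MvPolynomial (Fin (N + 2)) ℚ) * (X 0 ^ e * X 1 ^ f) =
              X 0 ^ (e + 1) * X 1 ^ f := by ring
          rw [this]; exact gen _ _ _ (by omega) hf
        · rw [mul_add]; exact Submodule.add_mem _ hx hy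
        · rw [mul_smul_comm]; exact Submodule.smul_mem _ _ hx
      · rw [show (C ((k + 1 : ℚ) ^ 2) : MvPolynomial (Fin (N + 2)) ℚ) *
            (X 1 * (rPoly N k - X 0 ^ k)) =
            ((k + 1 : ℚ) ^ 2) • (X 1 * (rPoly N k - X 0 ^ k)) by
          rw [smul_eq_C_mul]]
        refine Submodule.smul_mem _ _ ?_
        refine Submodule.span_induction (fun x hx => ?_) (by simp) (fun x y _ _ hx hy => ?_)
          (fun a x _ hx => ?_) h2
        · obtain ⟨⟨e, f⟩, ⟨hef, hf⟩, rfl⟩ := hx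
          have : (X 1 : MvPolynomial (Fin (N + 2)) ℚ) * (X 0 ^ e * X 1 ^ f) =
              X 0 ^ e * X 1 ^ (f + 1) := by ring
          rw [this]; exact gen _ _ _ (by omega) (by omega)
        · rw [mul_add]; exact Submodule.add_mem _ hx hy
        · rw [mul_smul_comm]; exact Submodule.smul_mem _ _ hx
      · rw [show (C ((k + 1 : ℚ) ^ 2) : MvPolynomial (Fin (N + 2)) ℚ) * (X 1 * X 0 ^ k) =
          ((k + 1 : ℚ) ^ 2) • (X 0 ^ k * X 1 ^ 1) by rw [smul_eq_C_mul]; ring]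
        exact Submodule.smul_mem _ _ (gen _ _ _ (by omega) le_rfl)



/-- image of δ_i² is β in the quotient -/
lemma delta_sq (m : ℕ) (i : Fin (2 * m + 1)) :
    (Ideal.Quotient.mk (relIdeal m)) (X i.succ.succ) ^ 2 =
      Ideal.Quotient.mk (relIdeal m) (X 1) := by
  rw [← map_pow, ← sub_eq_zero, ← map_sub, Ideal.Quotient.eq_zero_iff_mem]
  exact Ideal.subset_span (Or.inl ⟨i, rfl⟩)

lemma rel_zero (m : ℕ) (J : Finset (Fin (2 * m + 1))) (hJ : J.card ≤ m) :
    Ideal.Quotient.mk (relIdeal m)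
      (rPoly (2 * m + 1) (m - J.card) * ∏ k ∈ J, X k.succ.succ) = 0 := by
  rw [Ideal.Quotient.eq_zero_iff_mem]
  exact Ideal.subset_span (Or.inr ⟨J, hJ, rfl⟩)

/-- product of m distinct deltas is zero -/
lemma prod_card_m_zero (m : ℕ) (J : Finset (Fin (2 * m + 1))) (hJ : J.card = m) :
    Ideal.Quotient.mk (relIdeal m) (∏ k ∈ J, X k.succ.succ) = 0 := by
  have := rel_zero m J hJ.le
  rwa [hJ, Nat.sub_self, show rPoly (2 * m + 1) 0 = 1 from rfl, one_mul] at this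

/-- β^|K| = (δ_K)², as images -/
lemma beta_pow_card (m : ℕ) (K : Finset (Fin (2 * m + 1))) :
    (Ideal.Quotient.mk (relIdeal m) (X 1)) ^ K.card =
      Ideal.Quotient.mk (relIdeal m) (∏ k ∈ K, X k.succ.succ) *
        Ideal.Quotient.mk (relIdeal m) (∏ k ∈ K, X k.succ.succ) := by
  rw [← map_mul, ← Finset.prod_mul_distrib, map_prod, ← Finset.prod_const]
  refine Finset.prod_congr rfl fun i _ => ?_
  rw [map_mul, ← sq, delta_sq]


set_option maxHeartbeats 1000000 in
set_option synthInstance.maxHeartbeats 400000 in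
lemma key (m : ℕ) : ∀ (w a b : ℕ) (J : Finset (Fin (2 * m + 1))), a + b + J.card = w →
    Ideal.Quotient.mk (relIdeal m) (X 0 ^ a * X 1 ^ b * ∏ k ∈ J, X k.succ.succ) ∈
      Submodule.span ℚ ((fun t : ℕ × ℕ × Finset (Fin (2 * m + 1)) =>
          Ideal.Quotient.mk (relIdeal m)
            (X 0 ^ t.1 * X 1 ^ t.2.1 * ∏ k ∈ t.2.2, X k.succ.succ)) ''
        {t | t.1 + t.2.1 + t.2.2.card < m}) := by
  intro w
  induction w using Nat.strong_induction_on with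
  | _ w ih =>
  intro a b J hw
  by_cases hlt : a + b + J.card < m
  · exact Submodule.subset_span ⟨(a, b, J), hlt, rfl⟩
  push_neg at hlt
  set π := Ideal.Quotient.mk (relIdeal m) with hπdef
  by_cases hj : m ≤ J.card
  · -- the monomial is zero: a product of m distinct deltas divides it
    obtain ⟨J', hJ'sub, hJ'card⟩ := Finset.exists_subset_card_eq hj
    have hsplit : (∏ k ∈ J, (X k.succ.succ : MvPolynomial (Fin (2 * m + 1 + 2)) ℚ)) =
        (∏ k ∈ J \ J', X k.succ.succ) * ∏ k ∈ J', X k.succ.succ :=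
      (Finset.prod_sdiff hJ'sub).symm
    rw [hsplit, ← mul_assoc, map_mul, prod_card_m_zero m J' hJ'card, mul_zero]
    exact Submodule.zero_mem _
  push_neg at hj
  have hcardcompl : (Jᶜ : Finset (Fin (2 * m + 1))).card = 2 * m + 1 - J.card := by
    rw [Finset.card_compl, Fintype.card_fin]
  by_cases hb : m - J.card ≤ b
  · -- enough betas: convert m - |J| betas to deltas; monomial is zero
    obtain ⟨K, hKsub, hKcard⟩ :=
      Finset.exists_subset_card_eq (s := Jᶜ) (n := m - J.card) (by omega)
    have hdisj : Disjoint K J :=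
      Finset.disjoint_left.mpr fun x hx hxJ => Finset.mem_compl.mp (hKsub hx) hxJ
    have hB2 : π (X 1) ^ (m - J.card) = π (∏ k ∈ K, X k.succ.succ) *
        π (∏ k ∈ K, X k.succ.succ) := by rw [← hKcard]; exact beta_pow_card m K
    have hKJ : π (∏ k ∈ K, X k.succ.succ) * π (∏ k ∈ J, X k.succ.succ) = 0 := by
      rw [← map_mul, ← Finset.prod_union hdisj]
      exact prod_card_m_zero m _ (by rw [Finset.card_union_of_disjoint hdisj]; omega)
    obtain ⟨b', rfl⟩ : ∃ b', b = b' + (m - J.card) := ⟨b - (m - J.card), by omega⟩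
    have e1 : π (X 0 ^ a * X 1 ^ (b' + (m - J.card)) * ∏ k ∈ J, X k.succ.succ) =
        π (X 0) ^ a * π (X 1) ^ b' *
          (π (∏ k ∈ K, X k.succ.succ) *
            (π (∏ k ∈ K, X k.succ.succ) * π (∏ k ∈ J, X k.succ.succ))) := by
      rw [map_mul, map_mul, map_pow, map_pow, pow_add, hB2]; ring
    rw [e1, hKJ, mul_zero, mul_zero]
    exact Submodule.zero_mem _
  · -- main case: use the relation r_d · δ_{K∪J}
    push_neg at hb
    set d := m - J.card - b with hd
    obtain ⟨K, hKsub, hKcard⟩ := Finset.exists_subset_card_eq (s := Jᶜ) (n := b) (by omega)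
    have hdisj : Disjoint K J :=
      Finset.disjoint_left.mpr fun x hx hxJ => Finset.mem_compl.mp (hKsub hx) hxJ
    have hB2 : π (X 1) ^ b = π (∏ k ∈ K, X k.succ.succ) *
        π (∏ k ∈ K, X k.succ.succ) := by rw [← hKcard]; exact beta_pow_card m K
    have hrel : π (rPoly (2 * m + 1) d) *
        (π (∏ k ∈ K, X k.succ.succ) * π (∏ k ∈ J, X k.succ.succ)) = 0 := by
      have h0 := rel_zero m (K ∪ J)
        (by rw [Finset.card_union_of_disjoint hdisj, hKcard]; omega)
      rw [show m - (K ∪ J).card = d by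
            rw [Finset.card_union_of_disjoint hdisj, hKcard]; omega,
          Finset.prod_union hdisj, map_mul, map_mul] at h0
      exact h0
    obtain ⟨a', rfl⟩ : ∃ a', a = a' + d := ⟨a - d, by omega⟩
    have hmain : π (X 0 ^ (a' + d) * X 1 ^ b * ∏ k ∈ J, X k.succ.succ) =
        -(π (X 0) ^ a' * π (X 1) ^ b *
            (π (rPoly (2 * m + 1) d - X 0 ^ d) * π (∏ k ∈ J, X k.succ.succ))) +
          π (X 0) ^ a' * π (∏ k ∈ K, X k.succ.succ) *
            (π (rPoly (2 * m + 1) d) *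
              (π (∏ k ∈ K, X k.succ.succ) * π (∏ k ∈ J, X k.succ.succ))) := by
      rw [map_sub, map_mul, map_mul, map_pow, map_pow, map_pow, pow_add, hB2]
      ring
    rw [hmain, hrel, mul_zero, add_zero]
    refine Submodule.neg_mem _ ?_
    refine Submodule.span_induction (p := fun x _ =>
        π (X 0) ^ a' * π (X 1) ^ b * (π x * π (∏ k ∈ J, X k.succ.succ)) ∈
          Submodule.span ℚ ((fun t : ℕ × ℕ × Finset (Fin (2 * m + 1)) =>
            Ideal.Quotient.mk (relIdeal m)
              (X 0 ^ t.1 * X 1 ^ t.2.1 * ∏ k ∈ t.2.2, X k.succ.succ)) ''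
          {t | t.1 + t.2.1 + t.2.2.card < m}))
      ?_ ?_ ?_ ?_ (rStruct (2 * m + 1) d)
    · rintro x ⟨⟨e, f⟩, ⟨hef, hf⟩, rfl⟩
      have e2 : π (X 0) ^ a' * π (X 1) ^ b * (π (X 0 ^ e * X 1 ^ f) *
          π (∏ k ∈ J, X k.succ.succ)) =
          π (X 0 ^ (a' + e) * X 1 ^ (b + f) * ∏ k ∈ J, X k.succ.succ) := by
        rw [map_mul, map_mul, map_mul, map_pow, map_pow, map_pow, map_pow,
          pow_add, pow_add]
        ring
      rw [e2]
      exact ih ((a' + e) + (b + f) + J.card) (by omega) _ _ J rfl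
    · simp
    · intro x y _ _ hx hy
      rw [map_add, show π (X 0) ^ a' * π (X 1) ^ b *
          ((π x + π y) * π (∏ k ∈ J, X k.succ.succ)) =
          π (X 0) ^ a' * π (X 1) ^ b * (π x * π (∏ k ∈ J, X k.succ.succ)) +
          π (X 0) ^ a' * π (X 1) ^ b * (π y * π (∏ k ∈ J, X k.succ.succ)) from by ring]
      exact Submodule.add_mem _ hx hy
    · intro c x _ hx
      have hs : π (c • x) = c • π x := by
        rw [hπdef, ← Ideal.Quotient.mkₐ_eq_mk ℚ]; exact map_smul _ c x
      rw [hs, smul_mul_assoc, mul_smul_comm]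
      exact Submodule.smul_mem _ _ hx


set_option maxHeartbeats 1000000 in
set_option synthInstance.maxHeartbeats 400000 in
lemma mulX_mem (m : ℕ) (i : Fin (2 * m + 1 + 2))
    {x : MvPolynomial (Fin (2 * m + 1 + 2)) ℚ ⧸ relIdeal m}
    (hx : x ∈ Submodule.span ℚ ((fun t : ℕ × ℕ × Finset (Fin (2 * m + 1)) =>
          Ideal.Quotient.mk (relIdeal m)
            (X 0 ^ t.1 * X 1 ^ t.2.1 * ∏ k ∈ t.2.2, X k.succ.succ)) ''
        {t | t.1 + t.2.1 + t.2.2.card < m})) :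
    x * Ideal.Quotient.mk (relIdeal m) (X i) ∈
      Submodule.span ℚ ((fun t : ℕ × ℕ × Finset (Fin (2 * m + 1)) =>
          Ideal.Quotient.mk (relIdeal m)
            (X 0 ^ t.1 * X 1 ^ t.2.1 * ∏ k ∈ t.2.2, X k.succ.succ)) ''
        {t | t.1 + t.2.1 + t.2.2.card < m}) := by
  set π := Ideal.Quotient.mk (relIdeal m) with hπdef
  refine Submodule.span_induction ?_ ?_ ?_ ?_ hx
  · rintro y ⟨⟨a, b, J⟩, -, rfl⟩
    simp only
    induction i using Fin.cases with
    | zero =>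
      rw [← map_mul, show (X 0 ^ a * X 1 ^ b * ∏ k ∈ J, X k.succ.succ) *
          (X (0 : Fin (2 * m + 1 + 2)) : MvPolynomial (Fin (2 * m + 1 + 2)) ℚ) =
          X 0 ^ (a + 1) * X 1 ^ b * ∏ k ∈ J, X k.succ.succ from by ring]
      exact key m _ (a + 1) b J rfl
    | succ i' =>
      induction i' using Fin.cases with
      | zero =>
        rw [Fin.succ_zero_eq_one, ← map_mul,
          show (X 0 ^ a * X 1 ^ b * ∏ k ∈ J, X k.succ.succ) *
            (X (1 : Fin (2 * m + 1 + 2)) : MvPolynomial (Fin (2 * m + 1 + 2)) ℚ) =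
            X 0 ^ a * X 1 ^ (b + 1) * ∏ k ∈ J, X k.succ.succ from by ring]
        exact key m _ a (b + 1) J rfl
      | succ k =>
        by_cases hk : k ∈ J
        · have e1 : π (X 0 ^ a * X 1 ^ b * ∏ j ∈ J, X j.succ.succ) * π (X k.succ.succ) =
              π (X 0) ^ a * π (X 1) ^ b * π (∏ j ∈ J.erase k, X j.succ.succ) *
                π (X k.succ.succ) ^ 2 := by
            rw [← Finset.mul_prod_erase J _ hk, map_mul, map_mul, map_mul, map_pow, map_pow]
            ring
          have e2 : π (X 0) ^ a * π (X 1) ^ b * π (∏ j ∈ J.erase k, X j.succ.succ) *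
              π (X k.succ.succ) ^ 2 =
              π (X 0 ^ a * X 1 ^ (b + 1) * ∏ j ∈ J.erase k, X j.succ.succ) := by
            rw [delta_sq, map_mul, map_mul, map_pow, map_pow, pow_succ]
            ring
          rw [e1, e2]
          exact key m _ a (b + 1) (J.erase k) rfl
        · rw [← map_mul, show (X 0 ^ a * X 1 ^ b * ∏ j ∈ J, X j.succ.succ) *
              (X k.succ.succ : MvPolynomial (Fin (2 * m + 1 + 2)) ℚ) =
              X 0 ^ a * X 1 ^ b * ∏ j ∈ insert k J, X j.succ.succ from by
            rw [Finset.prod_insert hk]; ring]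
          exact key m _ a b (insert k J) rfl
  · rw [zero_mul]; exact Submodule.zero_mem _
  · intro y z _ _ hy hz
    rw [add_mul]; exact Submodule.add_mem _ hy hz
  · intro c y _ hy
    rw [smul_mul_assoc]; exact Submodule.smul_mem _ _ hy

/-- In `H = ℚ[α,β,δ_1,…,δ_n]/I`, the images of the monomials
`α^a β^b ∏_{k∈J} δ_k` with `a + b + |J| < m` span `H` as a `ℚ`-vector space. -/
theorem monomials_span (m : ℕ) :
    Submodule.span ℚ
      ((fun t : ℕ × ℕ × Finset (Fin (2 * m + 1)) =>
          Ideal.Quotient.mk (relIdeal m)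
            (X 0 ^ t.1 * X 1 ^ t.2.1 * ∏ k ∈ t.2.2, X k.succ.succ)) ''
        {t | t.1 + t.2.1 + t.2.2.card < m}) = ⊤ := by
  rw [eq_top_iff]
  rintro x -
  obtain ⟨p, rfl⟩ := Ideal.Quotient.mk_surjective x
  induction p using MvPolynomial.induction_on with
  | C c =>
    have h1 : Ideal.Quotient.mk (relIdeal m) (1 : MvPolynomial (Fin (2 * m + 1 + 2)) ℚ) ∈
        Submodule.span ℚ ((fun t : ℕ × ℕ × Finset (Fin (2 * m + 1)) =>
          Ideal.Quotient.mk (relIdeal m)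
            (X 0 ^ t.1 * X 1 ^ t.2.1 * ∏ k ∈ t.2.2, X k.succ.succ)) ''
        {t | t.1 + t.2.1 + t.2.2.card < m}) := by
      simpa using key m 0 0 0 ∅ rfl
    have e1 : (C c : MvPolynomial (Fin (2 * m + 1 + 2)) ℚ) = c • 1 := by
      rw [smul_eq_C_mul, mul_one]
    have e2 : Ideal.Quotient.mk (relIdeal m)
        ((c : ℚ) • (1 : MvPolynomial (Fin (2 * m + 1 + 2)) ℚ)) =
        c • Ideal.Quotient.mk (relIdeal m) (1 : MvPolynomial (Fin (2 * m + 1 + 2)) ℚ) := by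
      rw [← Ideal.Quotient.mkₐ_eq_mk ℚ]; exact map_smul _ c 1
    rw [e1, e2]
    exact Submodule.smul_mem _ _ h1
  | add p q hp hq =>
    rw [map_add]; exact Submodule.add_mem _ hp hq
  | mul_X p i hp =>
    rw [map_mul]; exact mulX_mem m i hp
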